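/- Let r > 1/2 and let (κ_k)_{k≥1} be positive reals with c₁ k^{−2r} ≤ κ_k ≤ c₂ k^{−2r} for all k ≥ 1, for some constants 0 < c₁ ≤ c₂. For each integer n ≥ 1 define F_n(λ) = λ + (1/n) Σ_{k=1}^∞ κ_k/(√λ + κ_k) for λ > 0. Then there exist constants 0 < d₁ ≤ d₂ < ∞ and N such that for all n ≥ N, every minimizer λ*_n of F_n over (0, ∞) satisfies d₁ n^{−4r/(4r+1)} ≤ λ*_n ≤ d₂ n^{−4r/(4r+1)}. -/

import Mathlib

open Real Finset

private lemma bern {s v : ℝ} (hs : 0 < s) (hv : 1 ≤ v) :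
    1 + s * ((v - 1) / v) ≤ v ^ s := by
  have hv0 : (0:ℝ) < v := lt_of_lt_of_le one_pos hv
  rcases le_or_gt 1 s with h1 | h1
  · have hb := one_add_mul_self_le_rpow_one_add (s := v - 1) (by linarith) h1
    have h2 : s * ((v - 1) / v) ≤ s * (v - 1) := by
      apply mul_le_mul_of_nonneg_left _ hs.le
      rw [div_le_iff₀ hv0]
      nlinarith
    have h3 : (1 : ℝ) + (v - 1) = v := by ring
    rw [h3] at hb
    linarith
  · have hvi : (0:ℝ) < 1 / v := by positivity
    have hb := rpow_one_add_le_one_add_mul_self (s := 1 / v - 1) (by nlinarith)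
      hs.le h1.le
    have h3 : (1 : ℝ) + (1 / v - 1) = 1 / v := by ring
    rw [h3] at hb
    have hy0 : 0 ≤ s * ((v - 1) / v) := mul_nonneg hs.le (div_nonneg (by linarith) hv0.le)
    have hy1 : s * ((v - 1) / v) < 1 := by
      have hlt : (v - 1) / v < 1 := by rw [div_lt_one hv0]; linarith
      have hnn : 0 ≤ (v - 1) / v := div_nonneg (by linarith) hv0.le
      nlinarith
    have hid : 1 + s * (1 / v - 1) = 1 - s * ((v - 1) / v) := by
      field_simp
      ring
    rw [hid] at hb
    have hprod : v ^ s * (1 / v) ^ s = 1 := by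
      rw [← Real.mul_rpow hv0.le hvi.le, mul_one_div_cancel hv0.ne', Real.one_rpow]
    have hpos : (0:ℝ) < (1 / v) ^ s := rpow_pos_of_pos hvi s
    have hvs : (0:ℝ) < v ^ s := rpow_pos_of_pos hv0 s
    nlinarith [mul_le_mul_of_nonneg_left hb hvs.le]

private lemma keyineq {s a : ℝ} (hs : 0 < s) (ha : 1 ≤ a) :
    s * (a + 1) ^ (-s - 1) ≤ a ^ (-s) - (a + 1) ^ (-s) := by
  have ha0 : (0:ℝ) < a := lt_of_lt_of_le one_pos ha
  have ha1 : (0:ℝ) < a + 1 := by linarith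
  set v : ℝ := (a + 1) / a with hvdef
  have hv : 1 ≤ v := by rw [le_div_iff₀ ha0]; linarith
  have hfrac : (v - 1) / v = 1 / (a + 1) := by
    rw [hvdef]; field_simp; ring
  have hb := bern hs hv
  rw [hfrac] at hb
  have hvs : v ^ s = (a + 1) ^ s / a ^ s := Real.div_rpow ha1.le ha0.le s
  rw [hvs] at hb
  have hA : (0:ℝ) < a ^ s := rpow_pos_of_pos ha0 s
  have hB : (0:ℝ) < (a + 1) ^ s := rpow_pos_of_pos ha1 s
  -- hb : 1 + s * (1/(a+1)) ≤ (a+1)^s / a^s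
  have hb' : (1 + s * (1 / (a + 1))) * a ^ s ≤ (a + 1) ^ s := by
    rw [← le_div_iff₀ hA]; exact hb
  have e1 : a ^ (-s) = (a ^ s)⁻¹ := Real.rpow_neg ha0.le s
  have e2 : (a + 1) ^ (-s) = ((a + 1) ^ s)⁻¹ := Real.rpow_neg ha1.le s
  have e3 : (a + 1) ^ (-s - 1) = ((a + 1) ^ s)⁻¹ * (a + 1)⁻¹ := by
    rw [show -s - 1 = -s + -1 by ring, Real.rpow_add ha1, Real.rpow_neg_one, e2]
  rw [e1, e2, e3]
  have hb2 : (a + 1) * a ^ s + s * a ^ s ≤ (a + 1) * (a + 1) ^ s := by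
    have h7 := mul_le_mul_of_nonneg_right hb' ha1.le
    have h4 : (1 + s * (1 / (a + 1))) * a ^ s * (a + 1)
        = (a + 1) * a ^ s + s * a ^ s := by field_simp
    rw [h4] at h7
    linarith
  have key : s * a ^ s ≤ ((a + 1) ^ s - a ^ s) * (a + 1) := by nlinarith
  have h5 : (a ^ s)⁻¹ - ((a + 1) ^ s)⁻¹
      = ((a + 1) ^ s - a ^ s) / (a ^ s * (a + 1) ^ s) := by
    rw [inv_sub_inv hA.ne' hB.ne']
  have h6 : s * (((a + 1) ^ s)⁻¹ * (a + 1)⁻¹) = s / ((a + 1) ^ s * (a + 1)) := by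
    field_simp
  rw [h5, h6, div_le_div_iff₀ (by positivity) (by positivity)]
  nlinarith [mul_le_mul_of_nonneg_right key hB.le]

private lemma tail_bound {r : ℝ} (hr : 1 / 2 < r) (K : ℕ) (hK : 1 ≤ K) :
    ∑' j : ℕ, ((K : ℝ) + j + 1) ^ (-(2 * r)) ≤ (1 / (2 * r - 1)) * (K : ℝ) ^ (1 - 2 * r) := by
  set s : ℝ := 2 * r - 1 with hsdef
  have hs : 0 < s := by simp only [hsdef]; linarith
  have hK1 : (1:ℝ) ≤ (K : ℝ) := by exact_mod_cast hK
  set g : ℕ → ℝ := fun j => ((K : ℝ) + j) ^ (-s) with hgdef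
  apply Real.tsum_le_of_sum_range_le
  · intro j
    positivity
  · intro M
    have hterm : ∀ j : ℕ, ((K : ℝ) + j + 1) ^ (-(2 * r)) ≤ (1 / s) * (g j - g (j + 1)) := by
      intro j
      have ha : (1:ℝ) ≤ (K : ℝ) + j := by
        have : (0:ℝ) ≤ (j : ℝ) := Nat.cast_nonneg j
        linarith
      have hkey := keyineq hs ha
      have e1 : -s - 1 = -(2 * r) := by rw [hsdef]; ring
      have e2 : g (j + 1) = ((K : ℝ) + j + 1) ^ (-s) := by
        simp only [hgdef]
        push_cast
        ring_nf
      rw [e1] at hkey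
      have hs' : 0 < 1 / s := by positivity
      calc ((K : ℝ) + j + 1) ^ (-(2 * r))
          = (1 / s) * (s * ((K : ℝ) + j + 1) ^ (-(2 * r))) := by field_simp
        _ ≤ (1 / s) * (((K : ℝ) + j) ^ (-s) - ((K : ℝ) + j + 1) ^ (-s)) := by
            apply mul_le_mul_of_nonneg_left hkey hs'.le
        _ = (1 / s) * (g j - g (j + 1)) := by rw [e2]
    calc ∑ j ∈ range M, ((K : ℝ) + j + 1) ^ (-(2 * r))
        ≤ ∑ j ∈ range M, (1 / s) * (g j - g (j + 1)) :=
          Finset.sum_le_sum fun j _ => hterm j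
      _ = (1 / s) * ∑ j ∈ range M, (g j - g (j + 1)) := by rw [Finset.mul_sum]
      _ = (1 / s) * (g 0 - g M) := by
          congr 1
          induction M with
          | zero => simp
          | succ m ih => rw [Finset.sum_range_succ, ih]; ring
      _ ≤ (1 / s) * g 0 := by
          have : 0 ≤ g M := by positivity
          have hs' : 0 ≤ 1 / s := by positivity
          nlinarith
      _ = (1 / (2 * r - 1)) * (K : ℝ) ^ (1 - 2 * r) := by
          have h0 : g 0 = (K : ℝ) ^ (1 - 2 * r) := by
            simp only [hgdef, Nat.cast_zero, add_zero]
            rw [show -s = 1 - 2 * r by rw [hsdef]; ring]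
          rw [h0, hsdef]

private lemma summable_pow {r : ℝ} (hr : 1 / 2 < r) :
    Summable (fun k : ℕ => ((k : ℝ) + 1) ^ (-(2 * r))) := by
  have h : Summable (fun n : ℕ => (n : ℝ) ^ (-(2 * r))) :=
    Real.summable_nat_rpow.mpr (by linarith)
  have h2 := (summable_nat_add_iff 1).mpr h
  refine h2.congr fun k => ?_
  push_cast
  ring_nf

private lemma summable_term {r : ℝ} (hr : 1 / 2 < r) {κ : ℕ → ℝ} {c₂ : ℝ}
    (hκpos : ∀ k, 0 < κ k) (hκ2 : ∀ k, κ k ≤ c₂ * ((k : ℝ) + 1) ^ (-(2 * r)))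
    {l : ℝ} (hl : 0 < l) :
    Summable (fun k => κ k / (Real.sqrt l + κ k)) := by
  have hsl : 0 < Real.sqrt l := Real.sqrt_pos.mpr hl
  refine Summable.of_nonneg_of_le
    (fun k => div_nonneg (hκpos k).le (add_nonneg (Real.sqrt_nonneg l) (hκpos k).le))
    (fun k => ?_) (((summable_pow hr).mul_left (c₂ / Real.sqrt l)))
  have h1 : κ k / (Real.sqrt l + κ k) ≤ (c₂ * ((k : ℝ) + 1) ^ (-(2 * r))) / Real.sqrt l := by
    gcongr
    · exact (hκpos k).le.trans (hκ2 k)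
    · exact hκ2 k
    · linarith [hκpos k]
  calc κ k / (Real.sqrt l + κ k) ≤ (c₂ * ((k : ℝ) + 1) ^ (-(2 * r))) / Real.sqrt l := h1
    _ = c₂ / Real.sqrt l * ((k : ℝ) + 1) ^ (-(2 * r)) := by ring

private lemma rpow_aux {r c l : ℝ} (hr : 1 / 2 < r) (hc : 0 < c) (hl : 0 < l) :
    (c / Real.sqrt l) ^ (1 / (2 * r)) = c ^ (1 / (2 * r)) * l ^ (-(1 / (4 * r))) := by
  have hr0 : r ≠ 0 := by linarith
  have hsl : 0 < Real.sqrt l := Real.sqrt_pos.mpr hl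
  rw [Real.div_rpow hc.le hsl.le, Real.sqrt_eq_rpow,
    ← Real.rpow_mul hl.le, div_eq_mul_inv, ← Real.rpow_neg hl.le]
  congr 1
  rw [show (1:ℝ) / 2 * (1 / (2 * r)) = 1 / (4 * r) by field_simp; ring]

set_option maxHeartbeats 1000000 in
private lemma S_upper {r : ℝ} (hr : 1 / 2 < r) {κ : ℕ → ℝ} {c₂ : ℝ} (hc₂ : 0 < c₂)
    (hκpos : ∀ k, 0 < κ k) (hκ2 : ∀ k, κ k ≤ c₂ * ((k : ℝ) + 1) ^ (-(2 * r)))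
    {l : ℝ} (hl : 0 < l) (hl2 : Real.sqrt l ≤ c₂) :
    ∑' k, κ k / (Real.sqrt l + κ k) ≤
      (2 + 1 / (2 * r - 1)) * c₂ ^ (1 / (2 * r)) * l ^ (-(1 / (4 * r))) := by
  have hsl : 0 < Real.sqrt l := Real.sqrt_pos.mpr hl
  have hr0 : (0:ℝ) < 2 * r := by linarith
  set x : ℝ := (c₂ / Real.sqrt l) ^ (1 / (2 * r)) with hxdef
  have hratio : 1 ≤ c₂ / Real.sqrt l := (one_le_div hsl).mpr hl2
  have hx1 : 1 ≤ x := Real.one_le_rpow hratio (by positivity)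
  have hx0 : 0 < x := lt_of_lt_of_le one_pos hx1
  have hx2r : x ^ (2 * r) = c₂ / Real.sqrt l := by
    rw [hxdef, ← Real.rpow_mul (by positivity), one_div_mul_cancel hr0.ne', Real.rpow_one]
  set K : ℕ := ⌈x⌉₊ with hKdef
  have hK1 : 1 ≤ K := Nat.one_le_ceil_iff.mpr hx0
  have hKx : (K : ℝ) ≤ 2 * x := by
    have := Nat.ceil_lt_add_one hx0.le
    linarith [this]
  have hxK : x ≤ (K : ℝ) := Nat.le_ceil x
  have hsum := summable_term hr hκpos hκ2 hl
  rw [← hsum.sum_add_tsum_nat_add K]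
  have hpart1 : ∑ k ∈ range K, κ k / (Real.sqrt l + κ k) ≤ 2 * x := by
    calc ∑ k ∈ range K, κ k / (Real.sqrt l + κ k) ≤ ∑ _k ∈ range K, (1:ℝ) := by
          apply Finset.sum_le_sum
          intro k _
          rw [div_le_one (by linarith [hκpos k])]
          linarith [hκpos k]
      _ = (K : ℝ) := by simp
      _ ≤ 2 * x := hKx
  have hpart2 : ∑' k : ℕ, κ (k + K) / (Real.sqrt l + κ (k + K)) ≤ (1 / (2 * r - 1)) * x := by
    have hstep : ∀ k : ℕ, κ (k + K) / (Real.sqrt l + κ (k + K)) ≤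
        (c₂ / Real.sqrt l) * ((K : ℝ) + k + 1) ^ (-(2 * r)) := by
      intro k
      have h1 : κ (k + K) / (Real.sqrt l + κ (k + K)) ≤ κ (k + K) / Real.sqrt l := by
        gcongr
        · exact (hκpos _).le
        · linarith [hκpos (k + K)]
      have h2 : κ (k + K) ≤ c₂ * ((K : ℝ) + k + 1) ^ (-(2 * r)) := by
        have := hκ2 (k + K)
        rw [show ((k + K : ℕ) : ℝ) + 1 = (K : ℝ) + k + 1 by push_cast; ring] at this
        exact this
      calc κ (k + K) / (Real.sqrt l + κ (k + K)) ≤ κ (k + K) / Real.sqrt l := h1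
        _ ≤ (c₂ * ((K : ℝ) + k + 1) ^ (-(2 * r))) / Real.sqrt l := by gcongr
        _ = (c₂ / Real.sqrt l) * ((K : ℝ) + k + 1) ^ (-(2 * r)) := by ring
    have hsum2 : Summable (fun k : ℕ => (c₂ / Real.sqrt l) * ((K : ℝ) + k + 1) ^ (-(2 * r))) := by
      apply Summable.mul_left
      have := (summable_nat_add_iff K).mpr (summable_pow hr)
      refine this.congr fun k => ?_
      push_cast
      ring_nf
    calc ∑' k : ℕ, κ (k + K) / (Real.sqrt l + κ (k + K))
        ≤ ∑' k : ℕ, (c₂ / Real.sqrt l) * ((K : ℝ) + k + 1) ^ (-(2 * r)) :=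
          Summable.tsum_le_tsum hstep ((summable_nat_add_iff K).mpr hsum) hsum2
      _ = (c₂ / Real.sqrt l) * ∑' k : ℕ, ((K : ℝ) + k + 1) ^ (-(2 * r)) := tsum_mul_left
      _ ≤ (c₂ / Real.sqrt l) * ((1 / (2 * r - 1)) * (K : ℝ) ^ (1 - 2 * r)) := by
          apply mul_le_mul_of_nonneg_left (tail_bound hr K hK1) (by positivity)
      _ ≤ (c₂ / Real.sqrt l) * ((1 / (2 * r - 1)) * x ^ (1 - 2 * r)) := by
          have hmono : (K : ℝ) ^ (1 - 2 * r) ≤ x ^ (1 - 2 * r) :=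
            Real.rpow_le_rpow_of_nonpos hx0 hxK (by linarith)
          apply mul_le_mul_of_nonneg_left _ (by positivity)
          exact mul_le_mul_of_nonneg_left hmono (div_nonneg zero_le_one (by linarith))
      _ = (1 / (2 * r - 1)) * x := by
          rw [← hx2r, mul_comm (1 / (2 * r - 1)) (x ^ (1 - 2 * r)), ← mul_assoc,
            ← Real.rpow_add hx0, show 2 * r + (1 - 2 * r) = (1:ℝ) by ring, Real.rpow_one]
          ring
  have hxval : x = c₂ ^ (1 / (2 * r)) * l ^ (-(1 / (4 * r))) := rpow_aux hr hc₂ hl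
  calc ∑ k ∈ range K, κ k / (Real.sqrt l + κ k)
        + ∑' k : ℕ, κ (k + K) / (Real.sqrt l + κ (k + K))
      ≤ 2 * x + (1 / (2 * r - 1)) * x := add_le_add hpart1 hpart2
    _ = (2 + 1 / (2 * r - 1)) * x := by ring
    _ = (2 + 1 / (2 * r - 1)) * c₂ ^ (1 / (2 * r)) * l ^ (-(1 / (4 * r))) := by
        rw [hxval]; ring

set_option maxHeartbeats 1000000 in
private lemma S_lower {r : ℝ} (hr : 1 / 2 < r) {κ : ℕ → ℝ} {c₁ : ℝ} (hc₁ : 0 < c₁)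
    (hκpos : ∀ k, 0 < κ k) (hκ1 : ∀ k : ℕ, c₁ * ((k : ℝ) + 1) ^ (-(2 * r)) ≤ κ k)
    {l : ℝ} (hl : 0 < l) (hl2 : Real.sqrt l ≤ c₁ * (2:ℝ) ^ (-(2 * r)))
    (hsum : Summable (fun k => κ k / (Real.sqrt l + κ k))) :
    c₁ ^ (1 / (2 * r)) / 4 * l ^ (-(1 / (4 * r))) ≤ ∑' k, κ k / (Real.sqrt l + κ k) := by
  have hsl : 0 < Real.sqrt l := Real.sqrt_pos.mpr hl
  have hr0 : (0:ℝ) < 2 * r := by linarith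
  set y : ℝ := (c₁ / Real.sqrt l) ^ (1 / (2 * r)) with hydef
  have hratio : (2:ℝ) ^ (2 * r) ≤ c₁ / Real.sqrt l := by
    rw [le_div_iff₀ hsl]
    calc (2:ℝ) ^ (2 * r) * Real.sqrt l ≤ (2:ℝ) ^ (2 * r) * (c₁ * (2:ℝ) ^ (-(2 * r))) := by
          apply mul_le_mul_of_nonneg_left hl2 (by positivity)
      _ = c₁ := by
          rw [mul_comm c₁ _, ← mul_assoc, ← Real.rpow_add two_pos]
          norm_num
  have hy2 : (2:ℝ) ≤ y := by
    have h1 : ((2:ℝ) ^ (2 * r)) ^ (1 / (2 * r)) ≤ y :=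
      Real.rpow_le_rpow (by positivity) hratio (by positivity)
    rwa [← Real.rpow_mul (by norm_num), mul_one_div, div_self hr0.ne', Real.rpow_one] at h1
  have hy0 : (0:ℝ) < y := by linarith
  have hy2r : y ^ (2 * r) = c₁ / Real.sqrt l := by
    rw [hydef, ← Real.rpow_mul (by positivity), one_div_mul_cancel hr0.ne', Real.rpow_one]
  set K : ℕ := ⌊y⌋₊ with hKdef
  have hK1 : 1 ≤ K := by
    rw [hKdef]
    exact Nat.le_floor (by exact_mod_cast (by linarith : (1:ℝ) ≤ y))
  have hKy : (K : ℝ) ≤ y := Nat.floor_le hy0.le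
  have hyK : y / 2 ≤ (K : ℝ) := by
    have := Nat.lt_floor_add_one y
    linarith
  have hK0 : (0:ℝ) < (K : ℝ) := by exact_mod_cast hK1
  have hterm : ∀ k ∈ range K, (1:ℝ) / 2 ≤ κ k / (Real.sqrt l + κ k) := by
    intro k hk
    have hkK : (k:ℝ) + 1 ≤ (K:ℝ) := by
      have : k + 1 ≤ K := Finset.mem_range.mp hk
      exact_mod_cast this
    have hκk : Real.sqrt l ≤ κ k := by
      have h1 : ((K:ℝ)) ^ (-(2 * r)) ≤ ((k:ℝ) + 1) ^ (-(2 * r)) :=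
        Real.rpow_le_rpow_of_nonpos (by positivity) hkK (by linarith)
      have h2 : (y) ^ (-(2 * r)) ≤ ((K:ℝ)) ^ (-(2 * r)) :=
        Real.rpow_le_rpow_of_nonpos hK0 hKy (by linarith)
      have h3 : y ^ (-(2 * r)) = Real.sqrt l / c₁ := by
        rw [Real.rpow_neg hy0.le, hy2r, inv_div]
      have h4 := hκ1 k
      have h5 : c₁ * (Real.sqrt l / c₁) ≤ c₁ * ((k:ℝ) + 1) ^ (-(2 * r)) := by
        apply mul_le_mul_of_nonneg_left _ hc₁.le
        rw [← h3]; exact le_trans h2 h1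
      rw [mul_div_cancel₀ _ hc₁.ne'] at h5
      linarith
    rw [le_div_iff₀ (by linarith [hκpos k])]
    linarith [hκpos k]
  have hlow : (K : ℝ) / 2 ≤ ∑ k ∈ range K, κ k / (Real.sqrt l + κ k) := by
    calc (K : ℝ) / 2 = ∑ _k ∈ range K, (1:ℝ) / 2 := by
          rw [Finset.sum_const, Finset.card_range]; ring
      _ ≤ ∑ k ∈ range K, κ k / (Real.sqrt l + κ k) := Finset.sum_le_sum hterm
  have hfin : ∑ k ∈ range K, κ k / (Real.sqrt l + κ k) ≤ ∑' k, κ k / (Real.sqrt l + κ k) :=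
    Summable.sum_le_tsum (range K)
      (fun k _ => div_nonneg (hκpos k).le (add_nonneg hsl.le (hκpos k).le)) hsum
  have hyval : y = c₁ ^ (1 / (2 * r)) * l ^ (-(1 / (4 * r))) := rpow_aux hr hc₁ hl
  have : c₁ ^ (1 / (2 * r)) / 4 * l ^ (-(1 / (4 * r))) = y / 4 := by rw [hyval]; ring
  rw [this]
  have : y / 4 ≤ (K : ℝ) / 2 := by linarith
  linarith

set_option maxHeartbeats 1000000 in
/-- If the eigenvalues decay polynomially, `κ_k ≍ k^{−2r}` with `r > 1/2` (here `κ k`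
stands for `κ_{k+1}`), then for large `n` every minimizer over `(0,∞)` of
`F_n(λ) = λ + (1/n) Σ_k κ_k/(√λ + κ_k)` is of exact order `n^{−4r/(4r+1)}`. -/
theorem smoothing_parameter_order_polynomial (r : ℝ) (hr : 1 / 2 < r)
    (κ : ℕ → ℝ) (c₁ c₂ : ℝ) (hc₁ : 0 < c₁) (hc : c₁ ≤ c₂)
    (hκ : ∀ k : ℕ, c₁ * ((k : ℝ) + 1) ^ (-(2 * r)) ≤ κ k ∧
                   κ k ≤ c₂ * ((k : ℝ) + 1) ^ (-(2 * r))) :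
    ∃ d₁ d₂ : ℝ, ∃ N : ℕ, 0 < d₁ ∧ d₁ ≤ d₂ ∧
      ∀ n : ℕ, N ≤ n → ∀ l : ℝ, 0 < l →
        (∀ μ : ℝ, 0 < μ →
          l + (1 / (n : ℝ)) * (∑' k, κ k / (Real.sqrt l + κ k)) ≤
            μ + (1 / (n : ℝ)) * (∑' k, κ k / (Real.sqrt μ + κ k))) →
        d₁ * (n : ℝ) ^ (-(4 * r / (4 * r + 1))) ≤ l ∧
          l ≤ d₂ * (n : ℝ) ^ (-(4 * r / (4 * r + 1))) := by
  have hc₂ : 0 < c₂ := lt_of_lt_of_le hc₁ hc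
  have hκpos : ∀ k, 0 < κ k := fun k =>
    lt_of_lt_of_le (by positivity) (hκ k).1
  have hκ1 : ∀ k : ℕ, c₁ * ((k : ℝ) + 1) ^ (-(2 * r)) ≤ κ k := fun k => (hκ k).1
  have hκ2 : ∀ k : ℕ, κ k ≤ c₂ * ((k : ℝ) + 1) ^ (-(2 * r)) := fun k => (hκ k).2
  have h4r : (0:ℝ) < 4 * r := by linarith
  have h4r1 : (0:ℝ) < 4 * r + 1 := by linarith
  set q : ℝ := 4 * r / (4 * r + 1) with hqdef
  have hq : 0 < q := by positivity
  set Cu : ℝ := (2 + 1 / (2 * r - 1)) * c₂ ^ (1 / (2 * r)) with hCudef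
  have hCu : 0 < Cu := by
    apply mul_pos _ (Real.rpow_pos_of_pos hc₂ _)
    have : (0:ℝ) < 1 / (2 * r - 1) := by
      apply div_pos one_pos; linarith
    linarith
  set d₂ : ℝ := 1 + Cu with hd₂def
  have hd₂ : 0 < d₂ := by linarith
  set cl : ℝ := c₁ ^ (1 / (2 * r)) / 4 with hcldef
  have hcl : 0 < cl := by positivity
  set d₁ : ℝ := min ((cl / d₂) ^ (4 * r)) d₂ with hd₁def
  have hd₁ : 0 < d₁ := lt_min (Real.rpow_pos_of_pos (by positivity) _) hd₂
  set ε : ℝ := min (c₂ ^ 2) ((c₁ * (2:ℝ) ^ (-(2 * r))) ^ 2 / d₂) with hεdef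
  have hε : 0 < ε := lt_min (by positivity) (by positivity)
  -- find N
  have htend : Filter.Tendsto (fun n : ℕ => (n : ℝ) ^ (-q)) Filter.atTop (nhds 0) :=
    (tendsto_rpow_neg_atTop hq).comp tendsto_natCast_atTop_atTop
  obtain ⟨N₀, hN₀⟩ := Filter.eventually_atTop.mp (htend.eventually (gt_mem_nhds hε))
  refine ⟨d₁, d₂, max N₀ 1, hd₁, min_le_right _ _, ?_⟩
  intro n hn l hl hmin
  have hn1 : 1 ≤ n := le_trans (le_max_right _ _) hn
  have hn0 : (0:ℝ) < (n : ℝ) := by exact_mod_cast hn1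
  have hεn : (n : ℝ) ^ (-q) < ε := hN₀ n (le_trans (le_max_left _ _) hn)
  set lam0 : ℝ := (n : ℝ) ^ (-q) with hlam0def
  have hlam0 : 0 < lam0 := Real.rpow_pos_of_pos hn0 _
  have hr4 : (4 * r : ℝ) ≠ 0 := h4r.ne'
  have hr41 : (4 * r + 1 : ℝ) ≠ 0 := h4r1.ne'
  -- identity A : (1/n) * lam0 ^ (-(1/(4r))) = lam0
  have hidA : (1 / (n : ℝ)) * lam0 ^ (-(1 / (4 * r))) = lam0 := by
    rw [hlam0def, ← Real.rpow_mul hn0.le,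
      show (1:ℝ) / (n:ℝ) = (n:ℝ) ^ (-(1:ℝ)) by rw [Real.rpow_neg_one, one_div],
      ← Real.rpow_add hn0]
    congr 1
    rw [hqdef]
    field_simp
    ring
  -- identity B : n * lam0 = lam0 ^ (-(1/(4r)))
  have hidB : (n : ℝ) * lam0 = lam0 ^ (-(1 / (4 * r))) := by
    have hstep : (n:ℝ) * (n:ℝ) ^ (-q) = (n:ℝ) ^ (1 + -q) := by
      rw [Real.rpow_add hn0, Real.rpow_one]
    rw [hlam0def, hstep, ← Real.rpow_mul hn0.le]
    congr 1
    rw [hqdef]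
    field_simp
    ring
  -- bound at lam0
  have hlam0c₂ : Real.sqrt lam0 ≤ c₂ := by
    have h1 : lam0 ≤ c₂ ^ 2 := le_of_lt (lt_of_lt_of_le hεn (min_le_left _ _))
    calc Real.sqrt lam0 ≤ Real.sqrt (c₂ ^ 2) := Real.sqrt_le_sqrt h1
      _ = c₂ := Real.sqrt_sq hc₂.le
  have hSlam0 := S_upper hr hc₂ hκpos hκ2 hlam0 hlam0c₂
  have hfmin := hmin lam0 hlam0
  have hF : l + (1 / (n : ℝ)) * (∑' k, κ k / (Real.sqrt l + κ k)) ≤ d₂ * lam0 := by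
    calc l + (1 / (n : ℝ)) * (∑' k, κ k / (Real.sqrt l + κ k))
        ≤ lam0 + (1 / (n : ℝ)) * (∑' k, κ k / (Real.sqrt lam0 + κ k)) := hfmin
      _ ≤ lam0 + (1 / (n : ℝ)) * (Cu * lam0 ^ (-(1 / (4 * r)))) := by
          have h2 : (0:ℝ) ≤ 1 / (n:ℝ) := by positivity
          have h3 := mul_le_mul_of_nonneg_left hSlam0 h2
          rw [hCudef]
          rw [show (2 + 1 / (2 * r - 1)) * c₂ ^ (1 / (2 * r)) * lam0 ^ (-(1 / (4 * r)))
            = (2 + 1 / (2 * r - 1)) * c₂ ^ (1 / (2 * r)) * lam0 ^ (-(1 / (4 * r))) from rfl] at h3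
          linarith
      _ = lam0 + Cu * ((1 / (n : ℝ)) * lam0 ^ (-(1 / (4 * r)))) := by ring
      _ = lam0 + Cu * lam0 := by rw [hidA]
      _ = d₂ * lam0 := by rw [hd₂def]; ring
  have hSnonneg : 0 ≤ ∑' k, κ k / (Real.sqrt l + κ k) :=
    tsum_nonneg fun k => div_nonneg (hκpos k).le
      (add_nonneg (Real.sqrt_nonneg l) (hκpos k).le)
  have hupper : l ≤ d₂ * lam0 := by
    have h2 : (0:ℝ) ≤ (1 / (n:ℝ)) * (∑' k, κ k / (Real.sqrt l + κ k)) := by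
      apply mul_nonneg (by positivity) hSnonneg
    exact le_trans (le_add_of_nonneg_right h2) hF
  refine ⟨?_, hupper⟩
  -- lower bound
  have hlsmall : Real.sqrt l ≤ c₁ * (2:ℝ) ^ (-(2 * r)) := by
    have h1 : d₂ * lam0 ≤ (c₁ * (2:ℝ) ^ (-(2 * r))) ^ 2 := by
      have h2 : lam0 < (c₁ * (2:ℝ) ^ (-(2 * r))) ^ 2 / d₂ :=
        lt_of_lt_of_le hεn (min_le_right _ _)
      rw [lt_div_iff₀ hd₂] at h2
      linarith
    have h3 : l ≤ (c₁ * (2:ℝ) ^ (-(2 * r))) ^ 2 := le_trans hupper h1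
    calc Real.sqrt l ≤ Real.sqrt ((c₁ * (2:ℝ) ^ (-(2 * r))) ^ 2) := Real.sqrt_le_sqrt h3
      _ = c₁ * (2:ℝ) ^ (-(2 * r)) := Real.sqrt_sq (by positivity)
  have hSl := S_lower hr hc₁ hκpos hκ1 hl hlsmall (summable_term hr hκpos hκ2 hl)
  -- S l ≤ d₂ * lam0^{-1/(4r)}
  have hSl_up : ∑' k, κ k / (Real.sqrt l + κ k) ≤ d₂ * lam0 ^ (-(1 / (4 * r))) := by
    have h1 : (1 / (n:ℝ)) * (∑' k, κ k / (Real.sqrt l + κ k)) ≤ d₂ * lam0 := by linarith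
    have h2 := mul_le_mul_of_nonneg_left h1 hn0.le
    rw [show (n:ℝ) * ((1 / (n:ℝ)) * (∑' k, κ k / (Real.sqrt l + κ k)))
        = (∑' k, κ k / (Real.sqrt l + κ k)) by field_simp] at h2
    calc ∑' k, κ k / (Real.sqrt l + κ k) ≤ (n:ℝ) * (d₂ * lam0) := h2
      _ = d₂ * ((n:ℝ) * lam0) := by ring
      _ = d₂ * lam0 ^ (-(1 / (4 * r))) := by rw [hidB]
  have hkey : cl * l ^ (-(1 / (4 * r))) ≤ d₂ * lam0 ^ (-(1 / (4 * r))) := by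
    rw [hcldef]; exact le_trans hSl hSl_up
  -- invert
  have hl14 : (0:ℝ) < l ^ (-(1 / (4 * r))) := Real.rpow_pos_of_pos hl _
  have hlam14 : (0:ℝ) < lam0 ^ (-(1 / (4 * r))) := Real.rpow_pos_of_pos hlam0 _
  have h6 : l ^ (-(1 / (4 * r))) ≤ (d₂ / cl) * lam0 ^ (-(1 / (4 * r))) := by
    rw [div_mul_eq_mul_div, le_div_iff₀ hcl]
    calc l ^ (-(1 / (4 * r))) * cl = cl * l ^ (-(1 / (4 * r))) := by ring
      _ ≤ d₂ * lam0 ^ (-(1 / (4 * r))) := hkey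
  have h7 : ((d₂ / cl) * lam0 ^ (-(1 / (4 * r)))) ^ (-(4 * r)) ≤
      (l ^ (-(1 / (4 * r)))) ^ (-(4 * r)) :=
    Real.rpow_le_rpow_of_nonpos hl14 h6 (by linarith)
  have e1 : (l ^ (-(1 / (4 * r)))) ^ (-(4 * r)) = l := by
    rw [← Real.rpow_mul hl.le, show -(1 / (4 * r)) * -(4 * r) = 1 by field_simp, Real.rpow_one]
  have e2 : ((d₂ / cl) * lam0 ^ (-(1 / (4 * r)))) ^ (-(4 * r))
      = (d₂ / cl) ^ (-(4 * r)) * lam0 := by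
    rw [Real.mul_rpow (by positivity) hlam14.le, ← Real.rpow_mul hlam0.le,
      show -(1 / (4 * r)) * -(4 * r) = 1 by field_simp, Real.rpow_one]
  have e3 : (d₂ / cl) ^ (-(4 * r)) = (cl / d₂) ^ (4 * r) := by
    rw [Real.rpow_neg (by positivity), ← Real.inv_rpow (by positivity), inv_div]
  rw [e1, e2, e3] at h7
  calc d₁ * lam0 ≤ (cl / d₂) ^ (4 * r) * lam0 := by
        apply mul_le_mul_of_nonneg_right (min_le_left _ _) hlam0.le
    _ ≤ l := h7
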